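/- Let R be a d×d expanding integer matrix, B, L finite subsets of ℤ^d with 0 ∈ B ∩ L. For λ ∈ L define the vector e_{R,λ} = (1/√(#B)) (e^{2πi⟨R⁻¹b, λ⟩})_{b∈B} ∈ ℂ^{#B}. Then (R,B,L) forms a frame triple with bounds C ≤ D (i.e., C‖x‖² ≤ Σ_{λ∈L} |⟨x, e_{R,λ}⟩|² ≤ D‖x‖² for all x ∈ ℂ^{#B}) if and only if (Rᵀ, L, B) forms a Riesz sequence triple with bounds ((#B/#L)·C, (#B/#L)·D) (i.e., (#B/#L)·C·Σ|a_b|² ≤ ‖Σ_{b∈B} a_b e_{Rᵀ,b}‖² ≤ (#B/#L)·D·Σ|a_b|² for all (a_b) ∈ ℂ^{#B}). -/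

import Mathlib

open Complex Matrix Finset

noncomputable section

/-- Real version of an integer matrix. -/
def realMat {d : ℕ} (R : Matrix (Fin d) (Fin d) ℤ) : Matrix (Fin d) (Fin d) ℝ :=
  R.map (Int.cast)

/-- `R` is expanding: all (complex) eigenvalues have modulus strictly greater than 1. -/
def Expanding {d : ℕ} (R : Matrix (Fin d) (Fin d) ℤ) : Prop :=
  ∀ z : ℂ, (R.map (Int.cast : ℤ → ℂ)).charpoly.IsRoot z → 1 < ‖z‖

/-- Euclidean inner product on `ℝ^d`. -/
def ip {d : ℕ} (x y : Fin d → ℝ) : ℝ := ∑ i, x i * y i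

/-- The vector `e_{R,λ} = (1/√#B) (e^{2πi⟨R⁻¹b,λ⟩})_{b∈B} ∈ ℂ^{#B}`. -/
def eVec {d : ℕ} (R : Matrix (Fin d) (Fin d) ℤ) (B : Finset (Fin d → ℤ))
    (lam : Fin d → ℤ) : B → ℂ :=
  fun b => ((Real.sqrt B.card : ℂ))⁻¹ *
    Complex.exp (2 * Real.pi * Complex.I *
      (ip ((realMat R)⁻¹ *ᵥ (fun j => ((b : Fin d → ℤ) j : ℝ))) (fun i => (lam i : ℝ))))

/-- `(R,B,L)` is a frame triple with bounds `C ≤ D`. -/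
def IsFrameTriple {d : ℕ} (R : Matrix (Fin d) (Fin d) ℤ) (B L : Finset (Fin d → ℤ))
    (C D : ℝ) : Prop :=
  ∀ x : B → ℂ,
    C * ∑ b, ‖x b‖ ^ 2 ≤ ∑ lam ∈ L, ‖∑ b, x b * (starRingEnd ℂ) (eVec R B lam b)‖ ^ 2 ∧
    ∑ lam ∈ L, ‖∑ b, x b * (starRingEnd ℂ) (eVec R B lam b)‖ ^ 2 ≤ D * ∑ b, ‖x b‖ ^ 2

/-- `(R,B,L)` is a Riesz sequence triple with bounds `C ≤ D`. -/
def IsRieszTriple {d : ℕ} (R : Matrix (Fin d) (Fin d) ℤ) (B L : Finset (Fin d → ℤ))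
    (C D : ℝ) : Prop :=
  ∀ a : L → ℂ,
    C * ∑ lam, ‖a lam‖ ^ 2 ≤ ∑ b, ‖∑ lam, a lam * eVec R B lam b‖ ^ 2 ∧
    ∑ b, ‖∑ lam, a lam * eVec R B lam b‖ ^ 2 ≤ D * ∑ lam, ‖a lam‖ ^ 2

lemma ip_transpose {d : ℕ} (M : Matrix (Fin d) (Fin d) ℝ) (x y : Fin d → ℝ) :
    ip (Mᵀ *ᵥ x) y = ip (M *ᵥ y) x := by
  simp only [ip, Matrix.mulVec, dotProduct, Matrix.transpose_apply, Finset.sum_mul]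
  rw [Finset.sum_comm]
  exact Finset.sum_congr rfl fun j _ => Finset.sum_congr rfl fun i _ => by ring

lemma eVec_transpose {d : ℕ} (R : Matrix (Fin d) (Fin d) ℤ) (B L : Finset (Fin d → ℤ))
    (b : B) (l : L) :
    eVec Rᵀ L ↑b l = ((Real.sqrt L.card : ℂ))⁻¹ * (Real.sqrt B.card : ℂ) * eVec R B ↑l b := by
  have hB : (Real.sqrt B.card : ℝ) ≠ 0 := by
    have : (0:ℝ) < B.card := by exact_mod_cast Finset.card_pos.2 ⟨b.1, b.2⟩
    positivity
  have hM : realMat Rᵀ = (realMat R)ᵀ := by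
    simp [realMat, Matrix.transpose_map]
  unfold eVec
  rw [hM, ← Matrix.transpose_nonsing_inv, ip_transpose]
  have hBc : (Real.sqrt B.card : ℂ) ≠ 0 := by exact_mod_cast hB
  field_simp


theorem frame_triple_iff_riesz_triple_dual {d : ℕ}
    (R : Matrix (Fin d) (Fin d) ℤ) (hR : Expanding R)
    (B L : Finset (Fin d → ℤ)) (hB : (0 : Fin d → ℤ) ∈ B) (hL : (0 : Fin d → ℤ) ∈ L)
    (C D : ℝ) (hCD : C ≤ D) :
    IsFrameTriple R B L C D ↔
      IsRieszTriple Rᵀ L B ((B.card / L.card : ℝ) * C) ((B.card / L.card : ℝ) * D) := by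
  have hBpos : (0:ℝ) < B.card := by exact_mod_cast Finset.card_pos.2 ⟨0, hB⟩
  have hLpos : (0:ℝ) < L.card := by exact_mod_cast Finset.card_pos.2 ⟨0, hL⟩
  set q : ℝ := ((B.card : ℝ) / L.card) with hq
  have hqpos : (0:ℝ) < q := div_pos hBpos hLpos
  have key : ∀ (a : B → ℂ) (l : L),
      ‖∑ b, a b * eVec Rᵀ L ↑b l‖ ^ 2
        = q * ‖∑ b, (starRingEnd ℂ) (a b) * (starRingEnd ℂ) (eVec R B ↑l b)‖ ^ 2 := by
    intro a l
    have h1 : ∑ b, a b * eVec Rᵀ L (↑b) l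
        = ((Real.sqrt L.card : ℂ))⁻¹ * (Real.sqrt B.card : ℂ) *
          ∑ b, a b * eVec R B ↑l b := by
      rw [Finset.mul_sum]
      exact Finset.sum_congr rfl fun b _ => by rw [eVec_transpose R B L b l]; ring
    have h2 : ∑ b, (starRingEnd ℂ) (a b) * (starRingEnd ℂ) (eVec R B ↑l b)
        = (starRingEnd ℂ) (∑ b, a b * eVec R B ↑l b) := by
      rw [map_sum]
      exact Finset.sum_congr rfl fun b _ => (map_mul _ _ _).symm
    rw [h1, h2, norm_mul, RCLike.norm_conj, mul_pow]
    congr 1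
    rw [norm_mul, norm_inv, Complex.norm_real, Complex.norm_real, Real.norm_eq_abs,
      Real.norm_eq_abs, _root_.abs_of_nonneg (Real.sqrt_nonneg _), _root_.abs_of_nonneg (Real.sqrt_nonneg _),
      mul_pow, inv_pow, Real.sq_sqrt hLpos.le, Real.sq_sqrt hBpos.le]
    rw [hq]; ring
  constructor
  · intro h a
    obtain ⟨h1, h2⟩ := h (fun b => (starRingEnd ℂ) (a b))
    simp only [RCLike.norm_conj] at h1 h2
    have hsum : ∑ l : L, ‖∑ b, a b * eVec Rᵀ L ↑b l‖ ^ 2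
        = q * ∑ lam ∈ L, ‖∑ b, (starRingEnd ℂ) (a b) * (starRingEnd ℂ) (eVec R B lam b)‖ ^ 2 := by
      calc ∑ l : L, ‖∑ b, a b * eVec Rᵀ L ↑b l‖ ^ 2
          = ∑ l : L, q * ‖∑ b, (starRingEnd ℂ) (a b) * (starRingEnd ℂ) (eVec R B ↑l b)‖ ^ 2 :=
            Finset.sum_congr rfl fun l _ => key a l
        _ = q * ∑ l : L, ‖∑ b, (starRingEnd ℂ) (a b) * (starRingEnd ℂ) (eVec R B ↑l b)‖ ^ 2 :=
            (Finset.mul_sum _ _ _).symm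
        _ = _ := by
            congr 1
            exact Finset.sum_coe_sort L
              (fun lam => ‖∑ b, (starRingEnd ℂ) (a b) * (starRingEnd ℂ) (eVec R B lam b)‖ ^ 2)
    refine ⟨?_, ?_⟩
    · rw [hsum, mul_assoc]
      exact mul_le_mul_of_nonneg_left h1 hqpos.le
    · rw [hsum, mul_assoc]
      exact mul_le_mul_of_nonneg_left h2 hqpos.le
  · intro h x
    obtain ⟨h1, h2⟩ := h (fun b => (starRingEnd ℂ) (x b))
    simp only [RCLike.norm_conj] at h1 h2
    have hsum : ∑ l : L, ‖∑ b, (starRingEnd ℂ) (x b) * eVec Rᵀ L ↑b l‖ ^ 2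
        = q * ∑ lam ∈ L, ‖∑ b, x b * (starRingEnd ℂ) (eVec R B lam b)‖ ^ 2 := by
      calc ∑ l : L, ‖∑ b, (starRingEnd ℂ) (x b) * eVec Rᵀ L ↑b l‖ ^ 2
          = ∑ l : L, q * ‖∑ b, x b * (starRingEnd ℂ) (eVec R B ↑l b)‖ ^ 2 := by
            refine Finset.sum_congr rfl fun l _ => ?_
            have := key (fun b => (starRingEnd ℂ) (x b)) l
            simpa using this
        _ = q * ∑ l : L, ‖∑ b, x b * (starRingEnd ℂ) (eVec R B ↑l b)‖ ^ 2 :=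
            (Finset.mul_sum _ _ _).symm
        _ = _ := by
            congr 1
            exact Finset.sum_coe_sort L
              (fun lam => ‖∑ b, x b * (starRingEnd ℂ) (eVec R B lam b)‖ ^ 2)
    rw [hsum, mul_assoc] at h1 h2
    exact ⟨(mul_le_mul_iff_right₀ hqpos).mp h1, (mul_le_mul_iff_right₀ hqpos).mp h2⟩

end
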